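/- Let (S^(0)_1,…,S^(0)_i, S^(1)_1,…,S^(1)_i, S^(2)_1,…,S^(2)_i, S^(3)_1,…,S^(3)_i) be a generalized rewriting rule. Let K ⊆ {0,1,2,3}^k represent a k-dimensional USO with labelling L : K → [i], and h ∈ [k]. Then T_h(K, L) := ⋃_{v∈K} { v_1…v_{h-1} t_1…t_d v_{h+1}…v_k : t ∈ S^(v_h)_{L(v)} } represents a (k+d-1)-dimensional USO. -/

import Mathlib

/-- Strings `v` and `w` differ by exactly 2 in coordinate `i`. -/
def Diff2At (v w : List (Fin 4)) (i : ℕ) : Prop :=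
  (v.getD i 0 : ℕ) = (w.getD i 0 : ℕ) + 2 ∨ (w.getD i 0 : ℕ) = (v.getD i 0 : ℕ) + 2

/-- A set of strings in `{0,1,2,3}^n` represents an `n`-dimensional USO
(a `4ℤ^n`-periodic cube tiling): all strings have length `n`, there are `2^n`
of them, and any two distinct ones differ by exactly 2 in some coordinate. -/
def IsUSOSet (n : ℕ) (K : Finset (List (Fin 4))) : Prop :=
  (∀ v ∈ K, v.length = n) ∧ K.card = 2 ^ n ∧
    ∀ v ∈ K, ∀ w ∈ K, v ≠ w → ∃ i : ℕ, i < n ∧ Diff2At v w i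

/-- Replace the entry of `v` at (0-indexed) position `h` by the string `s`. -/
def splice (v : List (Fin 4)) (h : ℕ) (s : List (Fin 4)) : List (Fin 4) :=
  v.take h ++ s ++ v.drop (h + 1)

/-- A simple rewriting rule `(S⁽⁰⁾, S⁽¹⁾, S⁽²⁾, S⁽³⁾)` with target dimension `d`. -/
def IsSimpleRule (d : ℕ) (S : Fin 4 → Finset (List (Fin 4))) : Prop :=
  Disjoint (S 0) (S 2) ∧ IsUSOSet d (S 0 ∪ S 2) ∧
    Disjoint (S 1) (S 3) ∧ IsUSOSet d (S 1 ∪ S 3)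

/-- Applying a simple rewriting rule at (0-indexed) dimension `h`:
`S_h(K) = ⋃_{v ∈ K} { v₁…v_{h-1} s v_{h+1}…v_k : s ∈ S^(v_h) }`. -/
def rewriteSet (S : Fin 4 → Finset (List (Fin 4))) (h : ℕ)
    (K : Finset (List (Fin 4))) : Finset (List (Fin 4)) :=
  K.biUnion fun v => (S (v.getD h 0)).image (splice v h)

/-- A generalized rewriting rule with labels in `Fin i` and target dimension `d`. -/
def IsGenRule (d i : ℕ) (S : Fin 4 → Fin i → Finset (List (Fin 4))) : Prop :=
  (∀ j j' : Fin i, Disjoint (S 0 j) (S 2 j') ∧ IsUSOSet d (S 0 j ∪ S 2 j')) ∧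
    (∀ j j' : Fin i, Disjoint (S 1 j) (S 3 j') ∧ IsUSOSet d (S 1 j ∪ S 3 j'))

/-- Applying a generalized rewriting rule at (0-indexed) dimension `h` to the
labelled USO `(K, L)`:
`T_h(K, L) = ⋃_{v ∈ K} { v₁…v_{h-1} t v_{h+1}…v_k : t ∈ S^(v_h)_{L(v)} }`. -/
def genRewrite {i : ℕ} (S : Fin 4 → Fin i → Finset (List (Fin 4)))
    (L : List (Fin 4) → Fin i) (h : ℕ) (K : Finset (List (Fin 4))) :
    Finset (List (Fin 4)) :=
  K.biUnion fun v => (S (v.getD h 0) (L v)).image (splice v h)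

/-! ### Auxiliary lemmas about `splice` -/

lemma splice_length (v s : List (Fin 4)) (h : ℕ) (hh : h < v.length) :
    (splice v h s).length = v.length + s.length - 1 := by
  simp [splice]; omega

lemma splice_take (v s : List (Fin 4)) (h : ℕ) (hh : h ≤ v.length) :
    (splice v h s).take h = v.take h := by
  rw [splice, List.append_assoc, List.take_left'] ; simp; omega

lemma splice_mid (v s : List (Fin 4)) (h : ℕ) (hh : h ≤ v.length) :
    ((splice v h s).drop h).take s.length = s := by
  rw [splice, List.append_assoc, List.drop_left' (by simp; omega), List.take_left' rfl]

lemma splice_drop (v s : List (Fin 4)) (h : ℕ) (hh : h ≤ v.length) :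
    (splice v h s).drop (h + s.length) = v.drop (h + 1) := by
  rw [splice, List.drop_left' (by simp; omega)]

lemma splice_getD_lo (v s : List (Fin 4)) (h p : ℕ) (hh : h ≤ v.length) (hp : p < h) :
    (splice v h s).getD p 0 = v.getD p 0 := by
  have h1 : p < ((splice v h s).take h).length := by simp [splice]; omega
  have h2 : p < (v.take h).length := by simp; omega
  have e1 : ((splice v h s).take h)[p] = (v.take h)[p] :=
    List.getElem_of_eq (splice_take v s h hh) _
  rw [List.getElem_take, List.getElem_take] at e1
  rw [List.getD_eq_getElem _ _ (by simp [splice] at h1 ⊢; omega),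
      List.getD_eq_getElem _ _ (by simp at h2; omega)]
  exact e1

lemma splice_getD_mid (v s : List (Fin 4)) (h p : ℕ) (hh : h ≤ v.length) (hp : p < s.length) :
    (splice v h s).getD (h + p) 0 = s.getD p 0 := by
  have key := splice_mid v s h hh
  have h2 : p < (((splice v h s).drop h).take s.length).length := by rw [key]; exact hp
  have e1 : (((splice v h s).drop h).take s.length)[p] = s[p] := List.getElem_of_eq key _
  rw [List.getElem_take, List.getElem_drop] at e1
  rw [List.getD_eq_getElem _ _ (by simp [splice] at h2 ⊢; omega),
      List.getD_eq_getElem _ _ hp]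
  exact e1

lemma splice_getD_hi (v s : List (Fin 4)) (h p : ℕ) (hh : h < v.length) (hp : h < p)
    (hp2 : p < v.length) :
    (splice v h s).getD (p + s.length - 1) 0 = v.getD p 0 := by
  have key := splice_drop v s h hh.le
  have h2 : p - h - 1 < ((splice v h s).drop (h + s.length)).length := by
    rw [key]; simp; omega
  have h3 : p - h - 1 < (v.drop (h+1)).length := by simp; omega
  have e1 : ((splice v h s).drop (h + s.length))[p-h-1] = (v.drop (h+1))[p-h-1]'h3 :=
    List.getElem_of_eq key _
  rw [List.getElem_drop, List.getElem_drop] at e1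
  rw [List.getD_eq_getElem _ _ (show p + s.length - 1 < (splice v h s).length by
        rw [splice_length v s h hh]; omega),
      List.getD_eq_getElem _ _ hp2]
  convert e1 using 2 <;> omega

/-! ### The level-counting lemma -/

lemma filter_eval_card {n : ℕ} {α : Type*} [Fintype α] [DecidableEq α] (h : Fin n) (c : α) :
    ((Finset.univ : Finset (Fin n → α)).filter fun x => x h = c).card
      = Fintype.card α ^ (n - 1) := by
  classical
  have e1 : (Finset.univ.filter fun x : Fin n → α => x h = c)
      = Fintype.piFinset (fun j => if j = h then {c} else Finset.univ) := by
    ext x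
    simp only [Finset.mem_filter, Finset.mem_univ, true_and, Fintype.mem_piFinset]
    constructor
    · intro hx j; split <;> simp_all
    · intro hx; have := hx h; simpa using this
  rw [e1, Fintype.card_piFinset]
  have e2 : ∀ j : Fin n, (if j = h then ({c} : Finset α) else Finset.univ).card
      = if j = h then 1 else Fintype.card α := by
    intro j; split <;> simp
  rw [Finset.prod_congr rfl (fun j _ => e2 j)]
  rw [← Finset.mul_prod_erase Finset.univ _ (Finset.mem_univ h)]
  simp only [if_pos rfl]
  rw [Finset.prod_congr rfl (fun j hj => if_neg (Finset.mem_erase.mp hj).1)]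
  rw [Finset.prod_const, Finset.card_erase_of_mem (Finset.mem_univ h)]
  simp

lemma fin_add_cases (a : Fin 4) (e : Fin 2) (t : Fin 4) :
    a + e.castLE (by norm_num) = t + 1 ↔ (a = t + 1 ∧ e = 0) ∨ (a = t ∧ e = 1) := by
  fin_cases a <;> fin_cases e <;> fin_cases t <;> decide

lemma level_count (k : ℕ) (K : Finset (List (Fin 4))) (hcard : K.card = 2 ^ k)
    (hdiff : ∀ v ∈ K, ∀ w ∈ K, v ≠ w → ∃ i : ℕ, i < k ∧ Diff2At v w i)
    (h : ℕ) (hh : h < k) (t : Fin 4) :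
    (K.filter fun v => v.getD h 0 = t).card + (K.filter fun v => v.getD h 0 = t + 1).card
      = 2 ^ (k - 1) := by
  classical
  set hf : Fin k := ⟨h, hh⟩ with hhf
  set F : List (Fin 4) × (Fin k → Fin 2) → (Fin k → Fin 4) :=
    fun p j => p.1.getD j 0 + (p.2 j).castLE (by norm_num) with hF
  set D : Finset (List (Fin 4) × (Fin k → Fin 2)) := K ×ˢ Finset.univ with hD
  have hinj : Set.InjOn F D := by
    rintro ⟨v, ε⟩ hv ⟨w, δ⟩ hw heq
    simp only [hD, Finset.coe_product, Set.mem_prod, Finset.mem_coe, Finset.mem_univ,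
      and_true] at hv hw
    have hvw : v = w := by
      by_contra hne
      obtain ⟨p, hp, hd⟩ := hdiff v hv w hw hne
      have h0 := congrFun heq ⟨p, hp⟩
      simp only [hF] at h0
      have h1 := congrArg Fin.val h0
      rw [Fin.val_add, Fin.val_add] at h1
      simp only [Fin.coe_castLE] at h1
      have ha : (v.getD p 0 : ℕ) < 4 := (v.getD p 0).isLt
      have hb : (w.getD p 0 : ℕ) < 4 := (w.getD p 0).isLt
      have he : ((ε ⟨p, hp⟩) : ℕ) < 2 := (ε ⟨p, hp⟩).isLt
      have hdl : ((δ ⟨p, hp⟩) : ℕ) < 2 := (δ ⟨p, hp⟩).isLt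
      rcases hd with hd | hd <;> omega
    subst hvw
    have hed : ε = δ := by
      funext j
      have h0 := congrFun heq j
      simp only [hF] at h0
      have h1 := add_left_cancel h0
      exact Fin.castLE_injective _ h1
    rw [hed]
  have hDcard : D.card = 2 ^ k * 2 ^ k := by
    rw [hD, Finset.card_product, hcard, Finset.card_univ, Fintype.card_fun]
    simp
  have himg : D.image F = Finset.univ := by
    apply Finset.eq_univ_of_card
    rw [Finset.card_image_of_injOn hinj, hDcard, Fintype.card_fun]
    simp [← mul_pow]
  have hsub : Set.InjOn F (D.filter fun p => F p hf = t + 1) :=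
    hinj.mono (by intro x hx; simp only [Finset.coe_filter, Set.mem_setOf_eq] at hx
                  exact hx.1)
  have key : ((Finset.univ : Finset (Fin k → Fin 4)).filter fun x => x hf = t + 1).card
      = (D.filter fun p => F p hf = t + 1).card := by
    rw [← himg, Finset.filter_image, Finset.card_image_of_injOn hsub]
  rw [filter_eval_card] at key
  have hsplit : (D.filter fun p => F p hf = t + 1)
      = (K.filter fun v => v.getD h 0 = t + 1)
          ×ˢ (Finset.univ.filter fun ε : Fin k → Fin 2 => ε hf = 0)
        ∪ (K.filter fun v => v.getD h 0 = t)
          ×ˢ (Finset.univ.filter fun ε : Fin k → Fin 2 => ε hf = 1) := by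
    ext ⟨v, ε⟩
    simp only [hD, hF, Finset.mem_filter, Finset.mem_product, Finset.mem_univ, true_and,
      Finset.mem_union, and_true]
    rw [fin_add_cases]
    tauto
  have hdisj : Disjoint
      ((K.filter fun v => v.getD h 0 = t + 1)
        ×ˢ (Finset.univ.filter fun ε : Fin k → Fin 2 => ε hf = 0))
      ((K.filter fun v => v.getD h 0 = t)
        ×ˢ (Finset.univ.filter fun ε : Fin k → Fin 2 => ε hf = 1)) := by
    rw [Finset.disjoint_left]
    rintro ⟨v, ε⟩ h1 h2
    simp only [Finset.mem_product, Finset.mem_filter, Finset.mem_univ, true_and] at h1 h2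
    rw [h1.2] at h2
    exact absurd h2.2 (by decide)
  rw [hsplit, Finset.card_union_of_disjoint hdisj, Finset.card_product, Finset.card_product,
    filter_eval_card, filter_eval_card] at key
  have h2pos : 0 < 2 ^ (k - 1) := Nat.pow_pos (by norm_num)
  have hc2 : Fintype.card (Fin 2) = 2 := by simp
  have hc4 : Fintype.card (Fin 4) = 4 := by simp
  rw [hc2, hc4] at key
  have h4 : (4 : ℕ) ^ (k - 1) = 2 ^ (k - 1) * 2 ^ (k - 1) := by
    rw [← mul_pow]; norm_num
  rw [h4] at key
  nlinarith [key, h2pos]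

theorem stmt9 (k d i : ℕ) (S : Fin 4 → Fin i → Finset (List (Fin 4)))
    (hS : IsGenRule d i S) (K : Finset (List (Fin 4))) (hK : IsUSOSet k K)
    (L : List (Fin 4) → Fin i) (h : ℕ) (hh : h < k) :
    IsUSOSet (k + d - 1) (genRewrite S L h K) := by
  classical
  obtain ⟨hlen, hcard, hdiff⟩ := hK
  have hk1 : 1 ≤ k := by omega
  have hi : 0 < i := (L []).pos
  set j0 : Fin i := L [] with hj0
  -- cross rule facts
  have cross : ∀ (c c' : Fin 4), ((c : ℕ) = (c' : ℕ) + 2 ∨ (c' : ℕ) = (c : ℕ) + 2) →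
      ∀ j j' : Fin i, Disjoint (S c j) (S c' j') ∧ IsUSOSet d (S c j ∪ S c' j') := by
    intro c c' hcc j j'
    have hv : (c = 0 ∧ c' = 2) ∨ (c = 2 ∧ c' = 0) ∨ (c = 1 ∧ c' = 3) ∨ (c = 3 ∧ c' = 1) := by
      rcases c with ⟨cv, hc⟩; rcases c' with ⟨cv', hc'⟩
      simp only [Fin.ext_iff] at *
      rcases hcc with hcc | hcc <;> omega
    rcases hv with ⟨rfl, rfl⟩ | ⟨rfl, rfl⟩ | ⟨rfl, rfl⟩ | ⟨rfl, rfl⟩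
    · exact hS.1 j j'
    · obtain ⟨d1, d2⟩ := hS.1 j' j
      exact ⟨d1.symm, by rwa [Finset.union_comm]⟩
    · exact hS.2 j j'
    · obtain ⟨d1, d2⟩ := hS.2 j' j
      exact ⟨d1.symm, by rwa [Finset.union_comm]⟩
  have subsetUSO : ∀ (c : Fin 4) (j : Fin i), ∃ U, IsUSOSet d U ∧ S c j ⊆ U := by
    intro c j
    fin_cases c
    · exact ⟨S 0 j ∪ S 2 j, (hS.1 j j).2, Finset.subset_union_left⟩
    · exact ⟨S 1 j ∪ S 3 j, (hS.2 j j).2, Finset.subset_union_left⟩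
    · exact ⟨S 0 j ∪ S 2 j, (hS.1 j j).2, Finset.subset_union_right⟩
    · exact ⟨S 1 j ∪ S 3 j, (hS.2 j j).2, Finset.subset_union_right⟩
  have ruleLen : ∀ (c : Fin 4) (j : Fin i), ∀ s ∈ S c j, s.length = d := by
    intro c j s hs
    obtain ⟨U, hU, hsub⟩ := subsetUSO c j
    exact hU.1 s (hsub hs)
  -- the core injectivity fact
  have core : ∀ v ∈ K, ∀ w ∈ K, ∀ s ∈ S (v.getD h 0) (L v), ∀ t ∈ S (w.getD h 0) (L w),
      splice v h s = splice w h t → v = w ∧ s = t := by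
    intro v hv w hw s hs t ht heq
    have hvl : v.length = k := hlen v hv
    have hwl : w.length = k := hlen w hw
    have hsl : s.length = d := ruleLen _ _ s hs
    have htl : t.length = d := ruleLen _ _ t ht
    have hst : s = t := by
      have e1 := splice_mid v s h (by omega)
      have e2 := splice_mid w t h (by omega)
      rw [← heq] at e2
      rw [htl, ← hsl] at e2
      exact e1.symm.trans e2
    have hvw : v = w := by
      by_contra hne
      obtain ⟨p, hp, hd⟩ := hdiff v hv w hw hne
      by_cases hph : p = h
      · subst hph
        have hdisj := (cross (v.getD p 0) (w.getD p 0) hd (L v) (L w)).1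
        subst hst
        exact (Finset.disjoint_left.mp hdisj hs) ht
      · have hgd : v.getD p 0 = w.getD p 0 := by
          rcases Nat.lt_or_ge p h with hlt | hge
          · rw [← splice_getD_lo v s h p (by omega) hlt, heq,
              splice_getD_lo w t h p (by omega) hlt]
          · have hgt : h < p := by omega
            have e1 := splice_getD_hi v s h p (by omega) hgt (by omega)
            have e2 := splice_getD_hi w t h p (by omega) hgt (by omega)
            rw [hsl] at e1
            rw [htl] at e2
            rw [← e1, heq, e2]
        have hgd' : (v.getD p 0 : ℕ) = (w.getD p 0 : ℕ) := congrArg Fin.val hgd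
        rcases hd with hd | hd <;> omega
    exact ⟨hvw, hst⟩
  refine ⟨?_, ?_, ?_⟩
  · -- lengths
    intro x hx
    simp only [genRewrite, Finset.mem_biUnion, Finset.mem_image] at hx
    obtain ⟨v, hv, s, hs, rfl⟩ := hx
    rw [splice_length v s h (by rw [hlen v hv]; omega), hlen v hv, ruleLen _ _ s hs]
  · -- cardinality
    rw [genRewrite, Finset.card_biUnion]
    swap
    · intro v hv w hw hne
      rw [Function.onFun, Finset.disjoint_left]
      rintro x hx1 hx2
      simp only [Finset.mem_image] at hx1 hx2
      obtain ⟨s, hs, hxs⟩ := hx1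
      obtain ⟨t, ht, hxt⟩ := hx2
      exact hne (core v hv w hw s hs t ht (hxs.trans hxt.symm)).1
    have himg : ∀ v ∈ K, ((S (v.getD h 0) (L v)).image (splice v h)).card
        = (S (v.getD h 0) (L v)).card := by
      intro v hv
      apply Finset.card_image_of_injOn
      intro s hs t ht heq
      exact (core v hv v hv s hs t ht heq).2
    rw [Finset.sum_congr rfl himg]
    -- now sum over fibers
    set a : Fin 4 → ℕ := fun c => (S c j0).card with haa
    have sum02 : ∀ j j' : Fin i, (S 0 j).card + (S 2 j').card = 2 ^ d := by
      intro j j'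
      obtain ⟨d1, d2⟩ := hS.1 j j'
      rw [← Finset.card_union_of_disjoint d1]
      exact d2.2.1
    have sum13 : ∀ j j' : Fin i, (S 1 j).card + (S 3 j').card = 2 ^ d := by
      intro j j'
      obtain ⟨d1, d2⟩ := hS.2 j j'
      rw [← Finset.card_union_of_disjoint d1]
      exact d2.2.1
    have const0 : ∀ j : Fin i, (S 0 j).card = a 0 := by
      intro j; have := sum02 j j0; have := sum02 j0 j0; simp only [haa]; omega
    have const1 : ∀ j : Fin i, (S 1 j).card = a 1 := by
      intro j; have := sum13 j j0; have := sum13 j0 j0; simp only [haa]; omega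
    have const2 : ∀ j : Fin i, (S 2 j).card = a 2 := by
      intro j; have := sum02 j0 j; have := sum02 j0 j0; simp only [haa]; omega
    have const3 : ∀ j : Fin i, (S 3 j).card = a 3 := by
      intro j; have := sum13 j0 j; have := sum13 j0 j0; simp only [haa]; omega
    have cardconst : ∀ (c : Fin 4) (j : Fin i), (S c j).card = a c := by
      intro c j
      fin_cases c
      · exact const0 j
      · exact const1 j
      · exact const2 j
      · exact const3 j
    have hfib := Finset.sum_fiberwise K (fun v => v.getD h 0)
      (fun v => (S (v.getD h 0) (L v)).card)
    rw [← hfib]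
    have hinner : ∀ c : Fin 4,
        ∑ v ∈ K.filter (fun v => v.getD h 0 = c), (S (v.getD h 0) (L v)).card
          = (K.filter (fun v => v.getD h 0 = c)).card * a c := by
      intro c
      rw [Finset.sum_congr rfl (fun v hv => by
        rw [(Finset.mem_filter.mp hv).2, cardconst c (L v)])]
      rw [Finset.sum_const, smul_eq_mul]
    rw [Finset.sum_congr rfl (fun c _ => hinner c), Fin.sum_univ_four]
    set n : Fin 4 → ℕ := fun c => (K.filter (fun v => v.getD h 0 = c)).card with hnn
    have l0 := level_count k K hcard hdiff h hh 0
    have l1 := level_count k K hcard hdiff h hh 1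
    have l2 := level_count k K hcard hdiff h hh 2
    rw [show ((0 : Fin 4) + 1) = 1 from by decide] at l0
    rw [show ((1 : Fin 4) + 1) = 2 from by decide] at l1
    rw [show ((2 : Fin 4) + 1) = 3 from by decide] at l2
    have ha02 : a 0 + a 2 = 2 ^ d := sum02 j0 j0
    have ha13 : a 1 + a 3 = 2 ^ d := sum13 j0 j0
    have hn0 : n 0 + n 1 = 2 ^ (k-1) := l0
    have hn1 : n 1 + n 2 = 2 ^ (k-1) := l1
    have hn2 : n 2 + n 3 = 2 ^ (k-1) := l2
    have hpow : 2 ^ (k + d - 1) = 2 ^ (k - 1) * 2 ^ d := by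
      rw [← pow_add]; congr 1; omega
    have he0 : n 2 = n 0 := by omega
    have he1 : n 3 = n 1 := by omega
    show n 0 * a 0 + n 1 * a 1 + n 2 * a 2 + n 3 * a 3 = 2 ^ (k + d - 1)
    rw [he0, he1, hpow]
    calc n 0 * a 0 + n 1 * a 1 + n 0 * a 2 + n 1 * a 3
        = n 0 * (a 0 + a 2) + n 1 * (a 1 + a 3) := by ring
      _ = n 0 * 2 ^ d + n 1 * 2 ^ d := by rw [ha02, ha13]
      _ = (n 0 + n 1) * 2 ^ d := by ring
      _ = 2 ^ (k - 1) * 2 ^ d := by rw [hn0]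
  · -- pairwise differences
    intro x hx y hy hne
    simp only [genRewrite, Finset.mem_biUnion, Finset.mem_image] at hx hy
    obtain ⟨v, hv, s, hs, rfl⟩ := hx
    obtain ⟨w, hw, t, ht, rfl⟩ := hy
    have hvl : v.length = k := hlen v hv
    have hwl : w.length = k := hlen w hw
    have hsl : s.length = d := ruleLen _ _ s hs
    have htl : t.length = d := ruleLen _ _ t ht
    -- helper for constructing the middle-coordinate difference
    have mid : ∀ q : ℕ, q < d → Diff2At s t q →
        ∃ i' : ℕ, i' < k + d - 1 ∧ Diff2At (splice v h s) (splice w h t) (h + q) := by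
      intro q hq hdq
      refine ⟨h + q, by omega, ?_⟩
      have e1 := splice_getD_mid v s h q (by omega) (by omega)
      have e2 := splice_getD_mid w t h q (by omega) (by omega)
      unfold Diff2At
      rw [e1, e2]
      exact hdq
    by_cases hvw : v = w
    · subst hvw
      have hst : s ≠ t := fun hst => hne (by rw [hst])
      obtain ⟨U, hU, hsub⟩ := subsetUSO (v.getD h 0) (L v)
      obtain ⟨q, hq, hdq⟩ := hU.2.2 s (hsub hs) t (hsub ht) hst
      obtain ⟨i', hi', hdd⟩ := mid q hq hdq
      exact ⟨h + q, by omega, hdd⟩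
    · obtain ⟨p, hp, hd⟩ := hdiff v hv w hw hvw
      by_cases hph : p = h
      · subst hph
        obtain ⟨hdisj, hU⟩ := cross (v.getD p 0) (w.getD p 0) hd (L v) (L w)
        have hst : s ≠ t := fun hst => by
          subst hst
          exact (Finset.disjoint_left.mp hdisj hs) ht
        have hsU : s ∈ S (v.getD p 0) (L v) ∪ S (w.getD p 0) (L w) :=
          Finset.mem_union_left _ hs
        have htU : t ∈ S (v.getD p 0) (L v) ∪ S (w.getD p 0) (L w) :=
          Finset.mem_union_right _ ht
        obtain ⟨q, hq, hdq⟩ := hU.2.2 s hsU t htU hst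
        obtain ⟨i', hi', hdd⟩ := mid q hq hdq
        exact ⟨p + q, by omega, hdd⟩
      · rcases Nat.lt_or_ge p h with hlt | hge
        · refine ⟨p, by omega, ?_⟩
          have e1 := splice_getD_lo v s h p (by omega) hlt
          have e2 := splice_getD_lo w t h p (by omega) hlt
          unfold Diff2At
          rw [e1, e2]
          exact hd
        · have hgt : h < p := by omega
          refine ⟨p + d - 1, by omega, ?_⟩
          have e1 := splice_getD_hi v s h p (by omega) hgt (by omega)
          have e2 := splice_getD_hi w t h p (by omega) hgt (by omega)
          rw [hsl] at e1
          rw [htl] at e2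
          unfold Diff2At
          rw [e1, e2]
          exact hd
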